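/- For every ε > 0 there exists a constant C > 0 such that for all m ∈ ℤ with m ≠ 0 one has ∑_{k ∈ ℤ, k ≠ 0} 1/(|k| · (k² + (m + k)²)^{1/2}) ≤ C · |m|^{ε − 1}. -/

import Mathlib

/-- Reduction lattice sum: `∑_{k ≠ 0} 1/(|k| (k² + (m+k)²)^{1/2}) ≲ |m|^{ε-1}`. -/
theorem stmt10 (ε : ℝ) (hε : 0 < ε) :
    ∃ C : ℝ, 0 < C ∧ ∀ m : ℤ, m ≠ 0 →
      ∑' k : ℤ, (if k ≠ 0 then
          ENNReal.ofReal
            (1 / (|(k : ℝ)| * Real.sqrt ((k : ℝ) ^ 2 + ((m : ℝ) + (k : ℝ)) ^ 2)))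
        else 0)
      ≤ ENNReal.ofReal (C * |(m : ℝ)| ^ (ε - 1)) := by
  set δ := min ε 1 with hδdef
  have hδ0 : 0 < δ := lt_min hε one_pos
  have hδ1 : δ ≤ 1 := min_le_right _ _
  have hδε : δ ≤ ε := min_le_left _ _
  have hp : 1 < 1 + δ := by linarith
  have hSsum : Summable (fun k : ℤ => 1 / |(k : ℝ)| ^ (1 + δ)) := by
    have := (Real.summable_one_div_int_add_rpow 0 (1 + δ)).mpr hp
    simpa using this
  set S := ∑' k : ℤ, 1 / |(k : ℝ)| ^ (1 + δ) with hSdef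
  have hS0 : 0 ≤ S := tsum_nonneg fun k => by positivity
  refine ⟨2 * S + 1, by linarith, ?_⟩
  intro m hm
  have hM1 : (1 : ℝ) ≤ |(m : ℝ)| := by
    have : (1 : ℤ) ≤ |m| := Int.one_le_abs hm
    calc (1 : ℝ) ≤ ((|m| : ℤ) : ℝ) := by exact_mod_cast this
      _ = |(m : ℝ)| := by push_cast; ring
  have hM0 : (0 : ℝ) < |(m : ℝ)| := lt_of_lt_of_le one_pos hM1
  set M := |(m : ℝ)| with hMdef
  have key : ∀ k : ℤ, k ≠ 0 →
      1 / (|(k : ℝ)| * Real.sqrt ((k : ℝ) ^ 2 + ((m : ℝ) + (k : ℝ)) ^ 2))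
        ≤ 2 * M ^ (δ - 1) * (1 / |(k : ℝ)| ^ (1 + δ)) := by
    intro k hk
    set K := |(k : ℝ)| with hKdef
    set R := Real.sqrt ((k : ℝ) ^ 2 + ((m : ℝ) + (k : ℝ)) ^ 2) with hRdef
    have hK1 : (1 : ℝ) ≤ K := by
      have : (1 : ℤ) ≤ |k| := Int.one_le_abs hk
      calc (1 : ℝ) ≤ ((|k| : ℤ) : ℝ) := by exact_mod_cast this
        _ = K := by rw [hKdef]; push_cast; ring
    have hK0 : (0 : ℝ) < K := lt_of_lt_of_le one_pos hK1
    have hR0 : (0 : ℝ) ≤ R := Real.sqrt_nonneg _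
    have hRK : K ≤ R := by
      rw [hRdef, show K = Real.sqrt (K ^ 2) by rw [Real.sqrt_sq hK0.le]]
      apply Real.sqrt_le_sqrt
      rw [hKdef, sq_abs]
      nlinarith [sq_nonneg ((m : ℝ) + (k : ℝ))]
    have hRmk : |(m : ℝ) + (k : ℝ)| ≤ R := by
      rw [hRdef, show |(m : ℝ) + (k : ℝ)| = Real.sqrt (|(m : ℝ) + (k : ℝ)| ^ 2) by
        rw [Real.sqrt_sq (abs_nonneg _)]]
      apply Real.sqrt_le_sqrt
      rw [sq_abs]
      nlinarith [sq_nonneg (k : ℝ)]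
    have hMR : M ≤ 2 * R := by
      have : M ≤ |(m : ℝ) + (k : ℝ)| + K := by
        rw [hMdef, hKdef]
        calc |(m : ℝ)| = |((m : ℝ) + (k : ℝ)) + (-(k : ℝ))| := by ring_nf
          _ ≤ |(m : ℝ) + (k : ℝ)| + |(-(k : ℝ))| := abs_add_le _ _
          _ = |(m : ℝ) + (k : ℝ)| + |(k : ℝ)| := by rw [abs_neg]
      linarith
    have main : K ^ δ * M ^ (1 - δ) ≤ 2 * R := by
      rcases le_total K M with h | h
      · have h1 : K ^ δ ≤ M ^ δ := Real.rpow_le_rpow hK0.le h hδ0.le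
        have h2 : M ^ δ * M ^ (1 - δ) = M := by
          rw [← Real.rpow_add hM0]; simp
        calc K ^ δ * M ^ (1 - δ) ≤ M ^ δ * M ^ (1 - δ) := by
              apply mul_le_mul_of_nonneg_right h1 (Real.rpow_nonneg hM0.le _)
          _ = M := h2
          _ ≤ 2 * R := hMR
      · have h1 : M ^ (1 - δ) ≤ K ^ (1 - δ) := Real.rpow_le_rpow hM0.le h (by linarith)
        have h2 : K ^ δ * K ^ (1 - δ) = K := by
          rw [← Real.rpow_add hK0]; simp
        calc K ^ δ * M ^ (1 - δ) ≤ K ^ δ * K ^ (1 - δ) := by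
              apply mul_le_mul_of_nonneg_left h1 (Real.rpow_nonneg hK0.le _)
          _ = K := h2
          _ ≤ 2 * R := by linarith
    have hR0' : (0 : ℝ) < R := lt_of_lt_of_le hK0 hRK
    have hKp : (0 : ℝ) < K ^ (1 + δ) := Real.rpow_pos_of_pos hK0 _
    have hMp : (0 : ℝ) < M ^ (1 - δ) := Real.rpow_pos_of_pos hM0 _
    have hrw : 2 * M ^ (δ - 1) * (1 / K ^ (1 + δ)) = 2 / (K ^ (1 + δ) * M ^ (1 - δ)) := by
      rw [show δ - 1 = -(1 - δ) by ring, Real.rpow_neg hM0.le]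
      field_simp
    rw [hrw, div_le_div_iff₀ (by positivity) (by positivity)]
    have hKsplit : K ^ (1 + δ) = K * K ^ δ := by
      rw [Real.rpow_add hK0, Real.rpow_one]
    calc 1 * (K ^ (1 + δ) * M ^ (1 - δ)) = K * (K ^ δ * M ^ (1 - δ)) := by
          rw [hKsplit]; ring
      _ ≤ K * (2 * R) := by
          apply mul_le_mul_of_nonneg_left main hK0.le
      _ = 2 * (K * R) := by ring
  calc ∑' k : ℤ, (if k ≠ 0 then
          ENNReal.ofReal
            (1 / (|(k : ℝ)| * Real.sqrt ((k : ℝ) ^ 2 + ((m : ℝ) + (k : ℝ)) ^ 2)))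
        else 0)
      ≤ ∑' k : ℤ, ENNReal.ofReal (2 * M ^ (δ - 1)) * ENNReal.ofReal (1 / |(k : ℝ)| ^ (1 + δ)) := by
        apply ENNReal.tsum_le_tsum
        intro k
        by_cases hk : k ≠ 0
        · rw [if_pos hk, ← ENNReal.ofReal_mul (by positivity)]
          exact ENNReal.ofReal_le_ofReal (key k hk)
        · rw [if_neg hk]
          exact zero_le
    _ = ENNReal.ofReal (2 * M ^ (δ - 1)) * ∑' k : ℤ, ENNReal.ofReal (1 / |(k : ℝ)| ^ (1 + δ)) :=
        ENNReal.tsum_mul_left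
    _ = ENNReal.ofReal (2 * M ^ (δ - 1)) * ENNReal.ofReal S := by
        rw [← ENNReal.ofReal_tsum_of_nonneg (fun k => by positivity) hSsum]
    _ = ENNReal.ofReal (2 * M ^ (δ - 1) * S) := (ENNReal.ofReal_mul (by positivity)).symm
    _ ≤ ENNReal.ofReal ((2 * S + 1) * M ^ (ε - 1)) := by
        apply ENNReal.ofReal_le_ofReal
        have h1 : M ^ (δ - 1) ≤ M ^ (ε - 1) :=
          Real.rpow_le_rpow_of_exponent_le hM1 (by linarith)
        have h2 : (0 : ℝ) ≤ M ^ (ε - 1) := Real.rpow_nonneg hM0.le _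
        nlinarith [Real.rpow_nonneg hM0.le (δ - 1)]
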